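/- Let ψ₁, ψ₂ ∈ ℝ⁴ be linearly independent real unit vectors and p ∈ [0,1]. Then the concurrence is convex on such mixtures: C(p ψ₁ψ₁ᵀ + (1−p) ψ₂ψ₂ᵀ) ≤ p C(ψ₁ψ₁ᵀ) + (1−p) C(ψ₂ψ₂ᵀ). -/

import Mathlib

open Matrix Polynomial

noncomputable section

/-- `J = σ_y ⊗ σ_y` as a complex 4×4 matrix (standard product basis). -/
def Jc : Matrix (Fin 4) (Fin 4) ℂ :=
  !![0, 0, 0, -1; 0, 0, 1, 0; 0, 1, 0, 0; -1, 0, 0, 0]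

/-- `J = σ_y ⊗ σ_y` as a real 4×4 matrix (standard product basis). -/
def Jr : Matrix (Fin 4) (Fin 4) ℝ :=
  !![0, 0, 0, -1; 0, 0, 1, 0; 0, 1, 0, 0; -1, 0, 0, 0]

/-- The spin-flipped matrix `ρ̃ = J ρ̄ J`. -/
def spinFlip (ρ : Matrix (Fin 4) (Fin 4) ℂ) : Matrix (Fin 4) (Fin 4) ℂ :=
  Jc * ρ.map (starRingEnd ℂ) * Jc

/-- The concurrence of a two-qubit density matrix `ρ`:
`max (0, √μ₁ − √μ₂ − √μ₃ − √μ₄)` where `μ₁ ≥ μ₂ ≥ μ₃ ≥ μ₄` are the (real,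
nonnegative) eigenvalues of `ρ ρ̃` listed with multiplicity. -/
def concurrence (ρ : Matrix (Fin 4) (Fin 4) ℂ) : ℝ :=
  let l : List ℝ :=
    (((ρ * spinFlip ρ).charpoly.roots.map Complex.re).sort (· ≤ ·))
  max 0 (Real.sqrt (l.getD 3 0) - Real.sqrt (l.getD 2 0) -
    Real.sqrt (l.getD 1 0) - Real.sqrt (l.getD 0 0))

/-- The (complex) density matrix of the pure state given by a real 4-vector `ψ`,
namely `ψ ψᵀ`. -/
def pureState (ψ : Fin 4 → ℝ) : Matrix (Fin 4) (Fin 4) ℂ :=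
  (Matrix.vecMulVec ψ ψ).map Complex.ofReal

end

namespace ConcAux

open Matrix Polynomial

noncomputable section

lemma eval_charpoly {n : ℕ} {R : Type*} [CommRing R] (M : Matrix (Fin n) (Fin n) R) (x : R) :
    M.charpoly.eval x = (x • (1 : Matrix (Fin n) (Fin n) R) - M).det := by
  rw [Matrix.charpoly, ← Polynomial.coe_evalRingHom, RingHom.map_det]
  congr 1
  ext i j
  by_cases h : i = j <;>
    simp [h, charmatrix_apply_eq, charmatrix_apply_ne, Matrix.one_apply, Ne, h]

lemma charpoly_rank_two (A : Matrix (Fin 4) (Fin 2) ℂ) (B : Matrix (Fin 2) (Fin 4) ℂ)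
    (μ ν : ℂ) (htr : (B * A) 0 0 + (B * A) 1 1 = μ + ν)
    (hdet : (B * A) 0 0 * (B * A) 1 1 - (B * A) 0 1 * (B * A) 1 0 = μ * ν) :
    (A * B).charpoly = ((0 ::ₘ 0 ::ₘ μ ::ₘ {ν}).map fun a => X - C a).prod := by
  apply Polynomial.eq_of_infinite_eval_eq
  apply Set.Infinite.mono (s := {x : ℂ | x ≠ 0})
  · intro x hx
    have hx : (x : ℂ) ≠ 0 := hx
    simp only [Set.mem_setOf_eq, eval_charpoly, Multiset.map_cons, Multiset.map_singleton,
      Multiset.prod_cons, Multiset.prod_singleton, eval_mul, eval_sub, eval_X, eval_C]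
    have h1 : x • (1 : Matrix (Fin 4) (Fin 4) ℂ) - A * B
        = x • ((1 : Matrix (Fin 4) (Fin 4) ℂ) - A * (x⁻¹ • B)) := by
      rw [smul_sub, Matrix.mul_smul, smul_smul, mul_inv_cancel₀ hx, one_smul]
    have h2 : (1 : Matrix (Fin 2) (Fin 2) ℂ) - (x⁻¹ • B) * A
        = x⁻¹ • (x • (1 : Matrix (Fin 2) (Fin 2) ℂ) - B * A) := by
      rw [smul_sub, smul_smul, inv_mul_cancel₀ hx, one_smul, Matrix.smul_mul]
    rw [h1, Matrix.det_smul, Matrix.det_one_sub_mul_comm, h2, Matrix.det_smul]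
    have h3 : (x • (1 : Matrix (Fin 2) (Fin 2) ℂ) - B * A).det
        = (x - (B * A) 0 0) * (x - (B * A) 1 1) - (-(B * A) 0 1) * (-(B * A) 1 0) := by
      rw [Matrix.det_fin_two]
      simp [Matrix.one_apply]
    rw [h3]
    have h4 : (x - (B * A) 0 0) * (x - (B * A) 1 1) - (-(B * A) 0 1) * (-(B * A) 1 0)
        = x * x - ((B * A) 0 0 + (B * A) 1 1) * x
          + ((B * A) 0 0 * (B * A) 1 1 - (B * A) 0 1 * (B * A) 1 0) := by ring
    rw [h4, htr, hdet]
    simp only [Fintype.card_fin]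
    field_simp
    ring
  · exact Set.Finite.infinite_compl (Set.finite_singleton 0)

lemma multiset_sort_eq (s : Multiset ℝ) (l : List ℝ) (h : (l : Multiset ℝ) = s)
    (hl : l.Pairwise (· ≤ ·)) : s.sort (· ≤ ·) = l := by
  apply List.Perm.eq_of_pairwise' (Multiset.pairwise_sort s _) hl
  rw [← Multiset.coe_eq_coe, Multiset.sort_eq, h]

lemma concurrence_eq (ρ : Matrix (Fin 4) (Fin 4) ℂ) (μ ν : ℝ) (hμν : ν ≤ μ) (hν : 0 ≤ ν)
    (h : (ρ * spinFlip ρ).charpoly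
      = ((0 ::ₘ 0 ::ₘ (ν : ℂ) ::ₘ {(μ : ℂ)}).map fun a => X - C a).prod) :
    concurrence ρ = max 0 (Real.sqrt μ - Real.sqrt ν) := by
  have hroots : (ρ * spinFlip ρ).charpoly.roots = (0 ::ₘ 0 ::ₘ (ν : ℂ) ::ₘ {(μ : ℂ)}) := by
    rw [h, Polynomial.roots_multiset_prod_X_sub_C]
  have hmap : ((ρ * spinFlip ρ).charpoly.roots.map Complex.re)
      = (0 ::ₘ 0 ::ₘ ν ::ₘ {μ}) := by
    rw [hroots]; simp
  have hsort : (((ρ * spinFlip ρ).charpoly.roots.map Complex.re).sort (· ≤ ·))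
      = [0, 0, ν, μ] := by
    rw [hmap]
    apply multiset_sort_eq
    · rfl
    · simp [List.pairwise_cons, hν, hμν, le_trans hν hμν]
  rw [concurrence]
  simp only [hsort]
  norm_num [List.getD]

/-- `J ψ` as explicit vector. -/
def Jv (ψ : Fin 4 → ℝ) : Fin 4 → ℝ := ![-ψ 3, ψ 2, ψ 1, -ψ 0]

/-- `ψᵀ J φ`. -/
def qf (ψ φ : Fin 4 → ℝ) : ℝ := -ψ 0 * φ 3 + ψ 1 * φ 2 + ψ 2 * φ 1 - ψ 3 * φ 0

set_option maxHeartbeats 1000000 in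
lemma spinFlip_pure (ψ : Fin 4 → ℝ) :
    spinFlip (pureState ψ) = (Matrix.vecMulVec (Jv ψ) (Jv ψ)).map Complex.ofReal := by
  ext i j
  fin_cases i <;> fin_cases j <;>
    simp [Matrix.mul_apply, Fin.sum_univ_four, pureState, spinFlip, Jc,
      Jv, Matrix.vecMulVec_apply, Complex.conj_ofReal, Matrix.vecMul, Matrix.vecHead,
      Matrix.vecTail, dotProduct, Matrix.map_apply, Function.comp]

lemma spinFlip_combo (ρ₁ ρ₂ : Matrix (Fin 4) (Fin 4) ℂ) (p q : ℝ) :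
    spinFlip (p • ρ₁ + q • ρ₂) = p • spinFlip ρ₁ + q • spinFlip ρ₂ := by
  have h : (p • ρ₁ + q • ρ₂).map (starRingEnd ℂ)
      = p • ρ₁.map (starRingEnd ℂ) + q • ρ₂.map (starRingEnd ℂ) := by
    ext i j
    simp [Matrix.map_apply, Complex.real_smul, _root_.map_mul, Complex.conj_ofReal]
  simp only [spinFlip, h, Matrix.mul_add, Matrix.add_mul, Matrix.mul_smul, Matrix.smul_mul]

/-- left 4×2 factor for the pure state. -/
def Ap (ψ : Fin 4 → ℝ) : Matrix (Fin 4) (Fin 2) ℂ :=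
  Matrix.of fun i k => ![((ψ i : ℝ) : ℂ), 0] k

/-- right 2×4 factor for the pure state. -/
def Bp (ψ : Fin 4 → ℝ) : Matrix (Fin 2) (Fin 4) ℂ :=
  Matrix.of fun k j => ![((qf ψ ψ * Jv ψ j : ℝ) : ℂ), 0] k

set_option maxHeartbeats 1000000 in
lemma pure_decomp (ψ : Fin 4 → ℝ) :
    pureState ψ * spinFlip (pureState ψ) = Ap ψ * Bp ψ := by
  rw [spinFlip_pure]
  ext i j
  fin_cases j <;>
    simp [Matrix.mul_apply, Fin.sum_univ_four, Fin.sum_univ_two, pureState,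
      Matrix.vecMulVec_apply, Matrix.map_apply, Ap, Bp, Jv, qf] <;>
    push_cast <;> ring

set_option maxHeartbeats 1000000 in
lemma pure_trace (ψ : Fin 4 → ℝ) :
    (Bp ψ * Ap ψ) 0 0 + (Bp ψ * Ap ψ) 1 1 = ((0 : ℝ) : ℂ) + (((qf ψ ψ)^2 : ℝ) : ℂ) := by
  simp [Matrix.mul_apply, Fin.sum_univ_four, Ap, Bp, Jv, qf]
  push_cast
  ring

set_option maxHeartbeats 1000000 in
lemma pure_det (ψ : Fin 4 → ℝ) :
    (Bp ψ * Ap ψ) 0 0 * (Bp ψ * Ap ψ) 1 1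
      - (Bp ψ * Ap ψ) 0 1 * (Bp ψ * Ap ψ) 1 0 = ((0 : ℝ) : ℂ) * (((qf ψ ψ)^2 : ℝ) : ℂ) := by
  simp [Matrix.mul_apply, Fin.sum_univ_four, Ap, Bp, Jv, qf]

lemma concurrence_pure (ψ : Fin 4 → ℝ) : concurrence (pureState ψ) = |qf ψ ψ| := by
  have h := concurrence_eq (pureState ψ) ((qf ψ ψ)^2) 0 (sq_nonneg _) le_rfl ?_
  · rw [h, Real.sqrt_zero, Real.sqrt_sq_eq_abs, sub_zero, max_eq_right (abs_nonneg _)]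
  · rw [pure_decomp]
    exact charpoly_rank_two _ _ _ _ (pure_trace ψ) (pure_det ψ)

/-- the mixture density matrix. -/
def mix (ψ₁ ψ₂ : Fin 4 → ℝ) (p : ℝ) : Matrix (Fin 4) (Fin 4) ℂ :=
  p • pureState ψ₁ + (1 - p) • pureState ψ₂

/-- left 4×2 factor for the mixture. -/
def Am (ψ₁ ψ₂ : Fin 4 → ℝ) : Matrix (Fin 4) (Fin 2) ℂ :=
  Matrix.of fun i k => ![((ψ₁ i : ℝ) : ℂ), ((ψ₂ i : ℝ) : ℂ)] k

/-- right 2×4 factor for the mixture. -/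
def Bm (ψ₁ ψ₂ : Fin 4 → ℝ) (p : ℝ) : Matrix (Fin 2) (Fin 4) ℂ :=
  Matrix.of fun k j =>
    ![(((p^2 * qf ψ₁ ψ₁) * Jv ψ₁ j + (p * (1-p) * qf ψ₁ ψ₂) * Jv ψ₂ j : ℝ) : ℂ),
      (((p * (1-p) * qf ψ₁ ψ₂) * Jv ψ₁ j + ((1-p)^2 * qf ψ₂ ψ₂) * Jv ψ₂ j : ℝ) : ℂ)] k

set_option maxHeartbeats 1000000 in
lemma mix_decomp (ψ₁ ψ₂ : Fin 4 → ℝ) (p : ℝ) :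
    mix ψ₁ ψ₂ p * spinFlip (mix ψ₁ ψ₂ p) = Am ψ₁ ψ₂ * Bm ψ₁ ψ₂ p := by
  have hf : spinFlip (mix ψ₁ ψ₂ p)
      = p • (Matrix.vecMulVec (Jv ψ₁) (Jv ψ₁)).map Complex.ofReal
        + (1-p) • (Matrix.vecMulVec (Jv ψ₂) (Jv ψ₂)).map Complex.ofReal := by
    rw [mix, spinFlip_combo, spinFlip_pure, spinFlip_pure]
  rw [hf]
  ext i j
  fin_cases j <;>
  simp [mix, Matrix.mul_apply, Fin.sum_univ_four, Fin.sum_univ_two, pureState,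
    Matrix.vecMulVec_apply, Matrix.map_apply, Am, Bm, Jv, qf, Complex.real_smul] <;>
  push_cast <;>
  ring

set_option maxHeartbeats 1000000 in
lemma BA_trace (ψ₁ ψ₂ : Fin 4 → ℝ) (p : ℝ) :
    (Bm ψ₁ ψ₂ p * Am ψ₁ ψ₂) 0 0 + (Bm ψ₁ ψ₂ p * Am ψ₁ ψ₂) 1 1
      = ((p^2 * (qf ψ₁ ψ₁)^2 + 2 * p * (1-p) * (qf ψ₁ ψ₂)^2
          + (1-p)^2 * (qf ψ₂ ψ₂)^2 : ℝ) : ℂ) := by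
  simp [Matrix.mul_apply, Fin.sum_univ_four, Am, Bm, Jv, qf]
  push_cast
  ring

set_option maxHeartbeats 1000000 in
lemma BA_det (ψ₁ ψ₂ : Fin 4 → ℝ) (p : ℝ) :
    (Bm ψ₁ ψ₂ p * Am ψ₁ ψ₂) 0 0 * (Bm ψ₁ ψ₂ p * Am ψ₁ ψ₂) 1 1
        - (Bm ψ₁ ψ₂ p * Am ψ₁ ψ₂) 0 1 * (Bm ψ₁ ψ₂ p * Am ψ₁ ψ₂) 1 0
      = ((p^2 * (1-p)^2 * (qf ψ₁ ψ₁ * qf ψ₂ ψ₂ - (qf ψ₁ ψ₂)^2)^2 : ℝ) : ℂ) := by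
  simp [Matrix.mul_apply, Fin.sum_univ_four, Am, Bm, Jv, qf]
  push_cast
  ring

end

end ConcAux

set_option maxHeartbeats 2000000 in
open ConcAux in
/-- Convexity of concurrence on mixtures of two real pure states. -/
theorem concurrence_convex_two
    (ψ₁ ψ₂ : Fin 4 → ℝ) (hind : LinearIndependent ℝ ![ψ₁, ψ₂])
    (h₁ : ∑ i, ψ₁ i ^ 2 = 1) (h₂ : ∑ i, ψ₂ i ^ 2 = 1)
    (p : ℝ) (hp : p ∈ Set.Icc (0 : ℝ) 1) :
    concurrence (p • pureState ψ₁ + (1 - p) • pureState ψ₂) ≤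
      p * concurrence (pureState ψ₁) + (1 - p) * concurrence (pureState ψ₂) := by
  obtain ⟨hp0, hp1⟩ := hp
  set a := qf ψ₁ ψ₁ with ha
  set b := qf ψ₂ ψ₂ with hb
  set d := qf ψ₁ ψ₂ with hd
  set t := p^2 * a^2 + 2 * p * (1-p) * d^2 + (1-p)^2 * b^2 with htdef
  set Δ := p^2 * (1-p)^2 * (a * b - d^2)^2 with hΔdef
  have hpq : 0 ≤ p * (1-p) := mul_nonneg hp0 (by linarith)
  have hΔ0 : 0 ≤ Δ := by rw [hΔdef]; positivity
  have ht0 : 0 ≤ t := by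
    rw [htdef]
    nlinarith [sq_nonneg (p*a), sq_nonneg ((1-p)*b), mul_nonneg hpq (sq_nonneg d)]
  set D := t^2 - 4*Δ with hDdef
  have hD0 : 0 ≤ D := by
    have hfact : D = ((p*a - (1-p)*b)^2 + 4*(p*(1-p))*d^2) * (p*a + (1-p)*b)^2 := by
      rw [hDdef, htdef, hΔdef]; ring
    rw [hfact]
    have h4 : (0:ℝ) ≤ 4*(p*(1-p))*d^2 := by positivity
    exact mul_nonneg (by positivity) (sq_nonneg _)
  have hDle : D ≤ t^2 := by rw [hDdef]; linarith
  set s := Real.sqrt D with hsdef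
  have hs0 : 0 ≤ s := Real.sqrt_nonneg D
  have hss : s^2 = D := Real.sq_sqrt hD0
  have hst : s ≤ t := by
    rw [hsdef]
    calc Real.sqrt D ≤ Real.sqrt (t^2) := Real.sqrt_le_sqrt hDle
      _ = t := Real.sqrt_sq ht0
  set μ := (t+s)/2 with hμdef
  set ν := (t-s)/2 with hνdef
  have hν0 : 0 ≤ ν := by rw [hνdef]; linarith
  have hμν : ν ≤ μ := by rw [hμdef, hνdef]; linarith
  have hμ0 : 0 ≤ μ := le_trans hν0 hμν
  have hsum : ν + μ = t := by rw [hμdef, hνdef]; ring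
  have hprod : ν * μ = Δ := by
    have h' : ν * μ = (t^2 - s^2)/4 := by rw [hμdef, hνdef]; ring
    rw [h', hss, hDdef]; ring
  -- the charpoly of the mixture
  have htrC : (Bm ψ₁ ψ₂ p * Am ψ₁ ψ₂) 0 0 + (Bm ψ₁ ψ₂ p * Am ψ₁ ψ₂) 1 1
      = ((ν : ℂ) + (μ : ℂ)) := by
    rw [BA_trace]
    have hr : (p^2 * (qf ψ₁ ψ₁)^2 + 2 * p * (1-p) * (qf ψ₁ ψ₂)^2
        + (1-p)^2 * (qf ψ₂ ψ₂)^2 : ℝ) = ν + μ := by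
      rw [hsum, htdef]
    rw [hr]; push_cast; ring
  have hdetC : (Bm ψ₁ ψ₂ p * Am ψ₁ ψ₂) 0 0 * (Bm ψ₁ ψ₂ p * Am ψ₁ ψ₂) 1 1
        - (Bm ψ₁ ψ₂ p * Am ψ₁ ψ₂) 0 1 * (Bm ψ₁ ψ₂ p * Am ψ₁ ψ₂) 1 0
      = ((ν : ℂ) * (μ : ℂ)) := by
    rw [BA_det]
    have hr : (p^2 * (1-p)^2 * (qf ψ₁ ψ₁ * qf ψ₂ ψ₂ - (qf ψ₁ ψ₂)^2)^2 : ℝ) = ν * μ := by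
      rw [hprod, hΔdef]
    rw [hr]; push_cast; ring
  have hC : concurrence (p • pureState ψ₁ + (1 - p) • pureState ψ₂)
      = max 0 (Real.sqrt μ - Real.sqrt ν) := by
    apply concurrence_eq _ μ ν hμν hν0
    show (mix ψ₁ ψ₂ p * spinFlip (mix ψ₁ ψ₂ p)).charpoly = _
    rw [mix_decomp]
    exact charpoly_rank_two _ _ _ _ htrC hdetC
  rw [hC, concurrence_pure ψ₁, concurrence_pure ψ₂, ← ha, ← hb]
  have hy0 : 0 ≤ p * |a| + (1-p) * |b| :=
    add_nonneg (mul_nonneg hp0 (abs_nonneg _)) (mul_nonneg (by linarith) (abs_nonneg _))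
  apply max_le hy0
  -- the main inequality
  have hxy : Real.sqrt μ * Real.sqrt ν = p * (1-p) * |a*b - d^2| := by
    rw [← Real.sqrt_mul hμ0, mul_comm μ ν, hprod]
    have hΔ' : Δ = (p * (1-p) * (a*b - d^2))^2 := by rw [hΔdef]; ring
    rw [hΔ', Real.sqrt_sq_eq_abs, abs_mul, abs_of_nonneg hpq]
  have h2 : (Real.sqrt μ - Real.sqrt ν)^2 = μ - 2*(p*(1-p)*|a*b - d^2|) + ν := by
    have he : (Real.sqrt μ - Real.sqrt ν)^2
        = Real.sqrt μ^2 - 2*(Real.sqrt μ * Real.sqrt ν) + Real.sqrt ν^2 := by ring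
    rw [he, Real.sq_sqrt hμ0, Real.sq_sqrt hν0, hxy]
  have htri : d^2 ≤ |a*b - d^2| + |a*b| := by
    calc d^2 = |d^2| := (abs_of_nonneg (sq_nonneg d)).symm
      _ = |(d^2 - a*b) + a*b| := by ring_nf
      _ ≤ |d^2 - a*b| + |a*b| := abs_add_le _ _
      _ = |a*b - d^2| + |a*b| := by rw [abs_sub_comm]
  have ht' : ν + μ = p^2 * a^2 + 2 * p * (1-p) * d^2 + (1-p)^2 * b^2 := by
    rw [hsum, htdef]
  have hsqle : (Real.sqrt μ - Real.sqrt ν)^2 ≤ (p * |a| + (1-p) * |b|)^2 := by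
    rw [h2]
    have hmul : p*(1-p)*d^2 ≤ p*(1-p)*(|a*b - d^2| + |a*b|) :=
      mul_le_mul_of_nonneg_left htri hpq
    have hexp : (p * |a| + (1-p) * |b|)^2
        = p^2*a^2 + 2*(p*(1-p))* |a*b| + (1-p)^2*b^2 := by
      calc (p * |a| + (1-p) * |b|)^2
          = p^2*|a|^2 + 2*(p*(1-p))*( |a| * |b| ) + (1-p)^2*|b|^2 := by ring
        _ = p^2*a^2 + 2*(p*(1-p))* |a*b| + (1-p)^2*b^2 := by
            rw [sq_abs, sq_abs, ← abs_mul]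
    rw [hexp]
    linarith [ht', hmul]
  have hx0 : 0 ≤ Real.sqrt μ - Real.sqrt ν := sub_nonneg.2 (Real.sqrt_le_sqrt hμν)
  calc Real.sqrt μ - Real.sqrt ν
      = Real.sqrt ((Real.sqrt μ - Real.sqrt ν)^2) := (Real.sqrt_sq hx0).symm
    _ ≤ Real.sqrt ((p * |a| + (1-p) * |b|)^2) := Real.sqrt_le_sqrt hsqle
    _ = p * |a| + (1-p) * |b| := Real.sqrt_sq hy0
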